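/- For any mixed graph G without directed cycles, nd_m(G) + 1 ≥ cw_m(G): G can be constructed by a mixed clique-width expression using nd_m(G) + 1 labels. -/

import Mathlib

structure MixedGraph (V : Type) where
  Edge : V → V → Prop
  Arc : V → V → Prop
  edge_symm : ∀ u v, Edge u v → Edge v u
  edge_irrefl : ∀ v, ¬ Edge v v
  arc_irrefl : ∀ v, ¬ Arc v v
  not_edge_arc : ∀ u v, Arc u v → ¬ Edge u v

namespace MixedGraph

variable {V : Type}

/-- No directed cycles: the arc relation has no nontrivial closed walks. -/
def Acyclic (G : MixedGraph V) : Prop := ∀ v, ¬ Relation.TransGen G.Arc v v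

def Nminus (G : MixedGraph V) (v : V) : Set V := {u | G.Arc u v}
def Nplus (G : MixedGraph V) (v : V) : Set V := {u | G.Arc v u}
def Nu (G : MixedGraph V) (v : V) : Set V := {u | G.Edge u v}

/-- Two vertices have the same mixed neighborhood type. -/
def SameType (G : MixedGraph V) (u v : V) : Prop :=
  G.Nminus u = G.Nminus v ∧ G.Nplus u = G.Nplus v ∧ G.Nu u \ {v} = G.Nu v \ {u}

/-- Mixed neighborhood diversity: the number of mixed types. -/
noncomputable def ndm (G : MixedGraph V) : ℕ := Nat.card (Quot G.SameType)

/-- The underlying undirected graph: arcs become edges. -/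
def underlying (G : MixedGraph V) : SimpleGraph V where
  Adj u v := G.Edge u v ∨ G.Arc u v ∨ G.Arc v u
  symm := by
    refine ⟨fun u v h => ?_⟩
    rcases h with h | h | h
    · exact Or.inl (G.edge_symm u v h)
    · exact Or.inr (Or.inr h)
    · exact Or.inr (Or.inl h)
  loopless := by
    refine ⟨fun v h => ?_⟩
    rcases h with h | h | h
    · exact G.edge_irrefl v h
    · exact G.arc_irrefl v h
    · exact G.arc_irrefl v h

/-- Same type in the underlying undirected graph. -/
def USameType (G : MixedGraph V) (u v : V) : Prop :=
  G.underlying.neighborSet u \ {v} = G.underlying.neighborSet v \ {u}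

/-- Neighborhood diversity of the underlying undirected graph. -/
noncomputable def ndu (G : MixedGraph V) : ℕ := Nat.card (Quot G.USameType)

/-- A proper coloring: distinct colors across edges, increasing along arcs. -/
def ProperColoring (G : MixedGraph V) (c : V → ℕ) : Prop :=
  (∀ u v, G.Edge u v → c u ≠ c v) ∧ (∀ u v, G.Arc u v → c u < c v)

/-- Chromatic number: least `k` admitting a proper coloring with colors `0,…,k-1`. -/
noncomputable def chi (G : MixedGraph V) : ℕ :=
  sInf {k | ∃ c : V → ℕ, G.ProperColoring c ∧ ∀ v, c v < k}

/-- Maxrank: the length of a longest directed path. -/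
noncomputable def Lambda (G : MixedGraph V) : ℕ :=
  sSup {ℓ | ∃ p : ℕ → V, ∀ i < ℓ, G.Arc (p i) (p (i + 1))}

/-- Inrank of a vertex: the length of a longest directed path ending in it. -/
noncomputable def inrank (G : MixedGraph V) (v : V) : ℕ :=
  sSup {ℓ | ∃ p : ℕ → V, p ℓ = v ∧ ∀ i < ℓ, G.Arc (p i) (p (i + 1))}

/-- A vertex cover of the underlying undirected graph (covers edges and arcs). -/
def IsVertexCover (G : MixedGraph V) (C : Finset V) : Prop :=
  ∀ u v, G.Edge u v ∨ G.Arc u v → u ∈ C ∨ v ∈ C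

/-- Vertex cover number. -/
noncomputable def vc (G : MixedGraph V) : ℕ :=
  sInf {n | ∃ C : Finset V, C.card = n ∧ G.IsVertexCover C}

/-- Transitive closure of a mixed graph without directed cycles: all transitive
arcs are added, and edges parallel to arcs are removed. -/
def tc (G : MixedGraph V) (hG : G.Acyclic) : MixedGraph V where
  Edge u v := G.Edge u v ∧ ¬ Relation.TransGen G.Arc u v ∧ ¬ Relation.TransGen G.Arc v u
  Arc u v := Relation.TransGen G.Arc u v
  edge_symm := fun u v h => ⟨G.edge_symm u v h.1, h.2.2, h.2.1⟩
  edge_irrefl := fun v h => G.edge_irrefl v h.1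
  arc_irrefl := hG
  not_edge_arc := fun u v h hE => hE.2.1 h

/-- Induced mixed subgraph. -/
def induce (G : MixedGraph V) (S : Set V) : MixedGraph S where
  Edge u v := G.Edge u.1 v.1
  Arc u v := G.Arc u.1 v.1
  edge_symm := fun u v h => G.edge_symm u.1 v.1 h
  edge_irrefl := fun v => G.edge_irrefl v.1
  arc_irrefl := fun v => G.arc_irrefl v.1
  not_edge_arc := fun u v => G.not_edge_arc u.1 v.1

/-- `I` is an independent set of the subgraph induced by `S`. -/
def IndepIn (G : MixedGraph V) (S I : Set V) : Prop :=
  I ⊆ S ∧ ∀ u ∈ I, ∀ v ∈ I, ¬ G.Edge u v ∧ ¬ G.Arc u v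

/-- `I` is a maximal independent set of the subgraph induced by `S`. -/
def MaximalIndepIn (G : MixedGraph V) (S I : Set V) : Prop :=
  G.IndepIn S I ∧ ∀ J, G.IndepIn S J → I ⊆ J → J = I

/-- Clique number of the underlying undirected graph. -/
noncomputable def cliqueNum (G : MixedGraph V) : ℕ :=
  sSup {n | ∃ s : Finset V, G.underlying.IsNClique n s}

end MixedGraph

/-- A labeled mixed graph: the intermediate object of a clique-width expression. -/
structure LGraph (V L : Type) where
  verts : Set V
  lab : V → L
  Edge : V → V → Prop
  Arc : V → V → Prop

/-- Mixed clique-width expressions over label set `L` and vertex names `V`. -/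
inductive MCExpr (L V : Type) where
  | vertex (v : V) (l : L)
  | union (a b : MCExpr L V)
  | eta (i j : L) (a : MCExpr L V)
  | alpha (i j : L) (a : MCExpr L V)
  | relabel (i j : L) (a : MCExpr L V)

open Classical in
/-- Evaluation of a mixed clique-width expression. -/
noncomputable def MCExpr.eval {L V : Type} : MCExpr L V → LGraph V L
  | .vertex v l => ⟨{v}, fun _ => l, fun _ _ => False, fun _ _ => False⟩
  | .union a b =>
      ⟨a.eval.verts ∪ b.eval.verts,
        fun x => if x ∈ a.eval.verts then a.eval.lab x else b.eval.lab x,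
        fun u v => a.eval.Edge u v ∨ b.eval.Edge u v,
        fun u v => a.eval.Arc u v ∨ b.eval.Arc u v⟩
  | .eta i j a =>
      ⟨a.eval.verts, a.eval.lab,
        fun u v => a.eval.Edge u v ∨ (u ∈ a.eval.verts ∧ v ∈ a.eval.verts ∧
          ((a.eval.lab u = i ∧ a.eval.lab v = j) ∨ (a.eval.lab u = j ∧ a.eval.lab v = i))),
        a.eval.Arc⟩
  | .alpha i j a =>
      ⟨a.eval.verts, a.eval.lab, a.eval.Edge,
        fun u v => a.eval.Arc u v ∨ (u ∈ a.eval.verts ∧ v ∈ a.eval.verts ∧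
          a.eval.lab u = i ∧ a.eval.lab v = j)⟩
  | .relabel i j a =>
      ⟨a.eval.verts, fun x => if a.eval.lab x = i then j else a.eval.lab x,
        a.eval.Edge, a.eval.Arc⟩

/-- Well-formedness: unions are disjoint, edge/arc operations use distinct labels. -/
def MCExpr.WF {L V : Type} : MCExpr L V → Prop
  | .vertex _ _ => True
  | .union a b => a.WF ∧ b.WF ∧ a.eval.verts ∩ b.eval.verts = ∅
  | .eta i j a => a.WF ∧ i ≠ j
  | .alpha i j a => a.WF ∧ i ≠ j
  | .relabel _ _ a => a.WF

/-- An expression using no arc operations (an undirected clique-width expression). -/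
def MCExpr.ArcFree {L V : Type} : MCExpr L V → Prop
  | .vertex _ _ => True
  | .union a b => a.ArcFree ∧ b.ArcFree
  | .eta _ _ a => a.ArcFree
  | .alpha _ _ _ => False
  | .relabel _ _ a => a.ArcFree

/-- An expression using no edge operations (a directed clique-width expression). -/
def MCExpr.EtaFree {L V : Type} : MCExpr L V → Prop
  | .vertex _ _ => True
  | .union a b => a.EtaFree ∧ b.EtaFree
  | .eta _ _ _ => False
  | .alpha _ _ a => a.EtaFree
  | .relabel _ _ a => a.EtaFree

/-- `e` is a well-formed expression constructing the mixed graph with edge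
relation `E` and arc relation `A` on all of `V`. -/
def MCExpr.Builds {L V : Type} (e : MCExpr L V) (E A : V → V → Prop) : Prop :=
  e.WF ∧ e.eval.verts = Set.univ ∧
    (∀ u v, e.eval.Edge u v ↔ E u v) ∧ (∀ u v, e.eval.Arc u v ↔ A u v)


namespace MixedGraph

variable {V : Type} (G : MixedGraph V)

lemma edge_transfer {x v w : V} (h : G.SameType x v) (hwv : w ≠ v) (hE : G.Edge w x) :
    G.Edge w v := by
  have hw : w ∈ G.Nu x \ {v} := ⟨hE, hwv⟩
  have := h.2.2 ▸ hw
  exact this.1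

lemma arcOut_transfer {x v w : V} (h : G.SameType x v) (hA : G.Arc w x) : G.Arc w v := by
  have hw : w ∈ G.Nminus x := hA
  have : w ∈ G.Nminus v := h.1 ▸ hw
  exact this

lemma arcIn_transfer {x v w : V} (h : G.SameType x v) (hA : G.Arc x w) : G.Arc v w := by
  have hw : w ∈ G.Nplus x := hA
  have : w ∈ G.Nplus v := h.2.1 ▸ hw
  exact this

lemma nuAux {u v w : V} (h1 : G.Nu u \ {v} = G.Nu v \ {u}) (h2 : G.Nu v \ {w} = G.Nu w \ {v}) :
    G.Nu u \ {w} ⊆ G.Nu w \ {u} := by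
  rintro x ⟨hxu, hxw⟩
  simp only [Set.mem_singleton_iff] at hxw
  have hxu' : G.Edge x u := hxu
  have hxnu : x ≠ u := fun h => G.edge_irrefl u (h ▸ hxu')
  by_cases hxv : x = v
  · subst hxv
    by_cases huw : u = w
    · exact ⟨(huw ▸ hxu' : G.Edge x w), hxnu⟩
    · -- u ∈ Nu x \ {w}  →  u ∈ Nu w \ {x}
      have hu : u ∈ G.Nu x \ {w} := ⟨G.edge_symm _ _ hxu', huw⟩
      have hu2 : u ∈ G.Nu w \ {x} := h2 ▸ hu
      -- Edge u w, hence Edge w u; w ∈ Nu u \ {x} → w ∈ Nu x \ {u}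
      have hwne : w ≠ x := fun h => hxw h.symm
      have hw : w ∈ G.Nu u \ {x} := ⟨G.edge_symm _ _ hu2.1, hwne⟩
      have hw2 : w ∈ G.Nu x \ {u} := h1 ▸ hw
      exact ⟨G.edge_symm _ _ hw2.1, hxnu⟩
  · have h1' : x ∈ G.Nu v \ {u} := h1 ▸ (⟨hxu, hxv⟩ : x ∈ G.Nu u \ {v})
    have h2' : x ∈ G.Nu w \ {v} := h2 ▸ (⟨h1'.1, hxw⟩ : x ∈ G.Nu v \ {w})
    exact ⟨h2'.1, hxnu⟩

lemma sameType_equivalence : Equivalence G.SameType where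
  refl v := ⟨rfl, rfl, rfl⟩
  symm h := ⟨h.1.symm, h.2.1.symm, h.2.2.symm⟩
  trans {u v w} h1 h2 := by
    refine ⟨h1.1.trans h2.1, h1.2.1.trans h2.2.1, ?_⟩
    exact le_antisymm (G.nuAux h1.2.2 h2.2.2) (G.nuAux h2.2.2.symm h1.2.2.symm)

end MixedGraph

open Classical in
lemma build_aux {V : Type} (G : MixedGraph V) {k : ℕ} (cls : V → Fin k)
    (hcls : ∀ u v, cls u = cls v → G.SameType u v) :
    ∀ (S : Finset V), S.Nonempty →
    ∃ e : MCExpr (Fin (k + 1)) V, e.WF ∧ e.eval.verts = ↑S ∧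
      (∀ v ∈ S, e.eval.lab v = (cls v).castSucc) ∧
      (∀ u v, e.eval.Edge u v ↔ u ∈ S ∧ v ∈ S ∧ G.Edge u v) ∧
      (∀ u v, e.eval.Arc u v ↔ u ∈ S ∧ v ∈ S ∧ G.Arc u v) := by
  intro S hS
  induction hS using Finset.Nonempty.cons_induction with
  | singleton a =>
    refine ⟨.vertex a (cls a).castSucc, trivial, by simp [MCExpr.eval], ?_, ?_, ?_⟩
    · intro v hv
      rw [Finset.mem_singleton] at hv
      subst hv
      simp [MCExpr.eval]
    · intro u v
      simp only [MCExpr.eval, Finset.mem_singleton, false_iff]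
      rintro ⟨rfl, rfl, h⟩
      exact absurd h (G.edge_irrefl _)
    · intro u v
      simp only [MCExpr.eval, Finset.mem_singleton, false_iff]
      rintro ⟨rfl, rfl, h⟩
      exact absurd h (G.arc_irrefl _)
  | cons w S' hw hS' IH =>
    obtain ⟨e', hWF', hV', hL', hE', hA'⟩ := IH
    set s : Fin (k + 1) := Fin.last k with hs
    have hne : ∀ t : Fin k, s ≠ t.castSucc := fun t h => (Fin.castSucc_lt_last t).ne' h
    have hwS' : w ∉ (↑S' : Set V) := by exact_mod_cast hw
    have key : ∀ l : List (Fin k), ∃ f : MCExpr (Fin (k + 1)) V, f.WF ∧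
        f.eval.verts = insert w ↑S' ∧
        f.eval.lab w = s ∧ (∀ v ∈ S', f.eval.lab v = (cls v).castSucc) ∧
        (∀ u v, f.eval.Edge u v ↔ (u ∈ S' ∧ v ∈ S' ∧ G.Edge u v) ∨
          (u = w ∧ v ∈ S' ∧ cls v ∈ l ∧ G.Edge w v) ∨
          (v = w ∧ u ∈ S' ∧ cls u ∈ l ∧ G.Edge u w)) ∧
        (∀ u v, f.eval.Arc u v ↔ (u ∈ S' ∧ v ∈ S' ∧ G.Arc u v) ∨
          (u = w ∧ v ∈ S' ∧ cls v ∈ l ∧ G.Arc w v) ∨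
          (v = w ∧ u ∈ S' ∧ cls u ∈ l ∧ G.Arc u w)) := by
      intro l
      induction l with
      | nil =>
        refine ⟨.union (.vertex w s) e', ⟨trivial, hWF', ?_⟩, ?_, ?_, ?_, ?_, ?_⟩
        · simp only [MCExpr.eval]
          rw [hV']
          ext x
          simp only [Set.mem_inter_iff, Set.mem_singleton_iff, Set.mem_empty_iff_false, iff_false,
            not_and]
          rintro rfl
          exact hwS'
        · simp only [MCExpr.eval]
          rw [hV', Set.singleton_union]
        · simp only [MCExpr.eval]
          simp
        · intro v hv
          simp only [MCExpr.eval]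
          have : v ∉ ({w} : Set V) := by
            simp only [Set.mem_singleton_iff]
            rintro rfl
            exact hw hv
          simp only [this, ↓reduceIte]
          exact hL' v hv
        · intro u v
          simp only [MCExpr.eval]
          simp [hE' u v]
        · intro u v
          simp only [MCExpr.eval]
          simp [hA' u v]
      | cons t l ih =>
        obtain ⟨f, fWF, fV, fLw, fLS, fE, fA⟩ := ih
        have labLast : ∀ u, u ∈ f.eval.verts → (f.eval.lab u = s ↔ u = w) := by
          intro u hu
          rw [fV] at hu
          rcases hu with rfl | hu
          · simp [fLw]
          · rw [fLS u (by exact_mod_cast hu)]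
            constructor
            · intro h
              exact absurd h.symm (hne _)
            · rintro rfl
              exact absurd hu hwS'
        have labT : ∀ u, u ∈ f.eval.verts → (f.eval.lab u = (t : Fin k).castSucc ↔
            u ∈ S' ∧ cls u = t) := by
          intro u hu
          rw [fV] at hu
          rcases hu with rfl | hu
          · rw [fLw]
            constructor
            · intro h
              exact absurd h (hne t)
            · rintro ⟨h, -⟩
              exact absurd h hw
          · have hu' : u ∈ S' := by exact_mod_cast hu
            rw [fLS u hu']
            simp only [Fin.castSucc_inj]
            exact ⟨fun h => ⟨hu', h⟩, fun h => h.2⟩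
        have memw : w ∈ f.eval.verts := by rw [fV]; exact Set.mem_insert _ _
        have memS : ∀ v ∈ S', v ∈ f.eval.verts := by
          intro v hv
          rw [fV]
          exact Set.mem_insert_of_mem _ (by exact_mod_cast hv)
        -- step 1: possibly add edges between w and class t
        obtain ⟨f1, f1WF, f1V, f1L, f1E, f1A⟩ :
            ∃ f1 : MCExpr (Fin (k + 1)) V, f1.WF ∧ f1.eval.verts = f.eval.verts ∧
              f1.eval.lab = f.eval.lab ∧
              (∀ u v, f1.eval.Edge u v ↔ f.eval.Edge u v ∨
                ((∃ x, cls x = t ∧ G.Edge w x) ∧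
                  ((u = w ∧ v ∈ S' ∧ cls v = t) ∨ (v = w ∧ u ∈ S' ∧ cls u = t)))) ∧
              (∀ u v, f1.eval.Arc u v ↔ f.eval.Arc u v) := by
          by_cases hc : ∃ x, cls x = t ∧ G.Edge w x
          · refine ⟨.eta s t.castSucc f, ⟨fWF, hne t⟩, rfl, rfl, ?_, fun u v => Iff.rfl⟩
            intro u v
            show f.eval.Edge u v ∨ _ ↔ _
            constructor
            · rintro (h | ⟨hu, hv, (⟨h1, h2⟩ | ⟨h1, h2⟩)⟩)
              · exact Or.inl h
              · exact Or.inr ⟨hc, Or.inl ⟨(labLast u hu).mp h1, ((labT v hv).mp h2).1,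
                  ((labT v hv).mp h2).2⟩⟩
              · exact Or.inr ⟨hc, Or.inr ⟨(labLast v hv).mp h2, ((labT u hu).mp h1).1,
                  ((labT u hu).mp h1).2⟩⟩
            · rintro (h | ⟨-, (⟨hue, hv, hcv⟩ | ⟨hve, hu, hcu⟩)⟩)
              · exact Or.inl h
              · exact Or.inr ⟨hue ▸ memw, memS v hv, Or.inl ⟨(labLast u (hue ▸ memw)).mpr hue,
                  (labT v (memS v hv)).mpr ⟨hv, hcv⟩⟩⟩
              · exact Or.inr ⟨memS u hu, hve ▸ memw, Or.inr ⟨(labT u (memS u hu)).mpr ⟨hu, hcu⟩,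
                  (labLast v (hve ▸ memw)).mpr hve⟩⟩
          · exact ⟨f, fWF, rfl, rfl, fun u v => by simp [hc], fun u v => Iff.rfl⟩
        -- step 2: possibly add arcs from w to class t
        obtain ⟨f2, f2WF, f2V, f2L, f2E, f2A⟩ :
            ∃ f2 : MCExpr (Fin (k + 1)) V, f2.WF ∧ f2.eval.verts = f.eval.verts ∧
              f2.eval.lab = f.eval.lab ∧
              (∀ u v, f2.eval.Edge u v ↔ f1.eval.Edge u v) ∧
              (∀ u v, f2.eval.Arc u v ↔ f.eval.Arc u v ∨
                ((∃ x, cls x = t ∧ G.Arc w x) ∧ u = w ∧ v ∈ S' ∧ cls v = t)) := by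
          by_cases hc : ∃ x, cls x = t ∧ G.Arc w x
          · refine ⟨.alpha s t.castSucc f1, ⟨f1WF, hne t⟩, f1V, f1L, fun u v => Iff.rfl, ?_⟩
            intro u v
            show f1.eval.Arc u v ∨ _ ↔ _
            rw [f1V, f1L, f1A u v]
            constructor
            · rintro (h | ⟨hu, hv, h1, h2⟩)
              · exact Or.inl h
              · exact Or.inr ⟨hc, (labLast u hu).mp h1, ((labT v hv).mp h2).1,
                  ((labT v hv).mp h2).2⟩
            · rintro (h | ⟨-, hue, hv, hcv⟩)
              · exact Or.inl h
              · exact Or.inr ⟨hue ▸ memw, memS v hv, (labLast u (hue ▸ memw)).mpr hue,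
                  (labT v (memS v hv)).mpr ⟨hv, hcv⟩⟩
          · exact ⟨f1, f1WF, f1V, f1L, fun u v => Iff.rfl,
              fun u v => by simp [f1A u v, hc]⟩
        -- step 3: possibly add arcs from class t to w
        obtain ⟨f3, f3WF, f3V, f3L, f3E, f3A⟩ :
            ∃ f3 : MCExpr (Fin (k + 1)) V, f3.WF ∧ f3.eval.verts = f.eval.verts ∧
              f3.eval.lab = f.eval.lab ∧
              (∀ u v, f3.eval.Edge u v ↔ f1.eval.Edge u v) ∧
              (∀ u v, f3.eval.Arc u v ↔ f2.eval.Arc u v ∨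
                ((∃ x, cls x = t ∧ G.Arc x w) ∧ v = w ∧ u ∈ S' ∧ cls u = t)) := by
          by_cases hc : ∃ x, cls x = t ∧ G.Arc x w
          · refine ⟨.alpha t.castSucc s f2, ⟨f2WF, (hne t).symm⟩, f2V, f2L,
              fun u v => f2E u v, ?_⟩
            intro u v
            show f2.eval.Arc u v ∨ _ ↔ _
            rw [f2V, f2L]
            constructor
            · rintro (h | ⟨hu, hv, h1, h2⟩)
              · exact Or.inl h
              · exact Or.inr ⟨hc, (labLast v hv).mp h2, ((labT u hu).mp h1).1,
                  ((labT u hu).mp h1).2⟩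
            · rintro (h | ⟨-, hve, hu, hcu⟩)
              · exact Or.inl h
              · exact Or.inr ⟨memS u hu, hve ▸ memw, (labT u (memS u hu)).mpr ⟨hu, hcu⟩,
                  (labLast v (hve ▸ memw)).mpr hve⟩
          · exact ⟨f2, f2WF, f2V, f2L, fun u v => f2E u v, fun u v => by simp [hc]⟩
        refine ⟨f3, f3WF, f3V.trans fV, by rw [f3L]; exact fLw,
          fun v hv => by rw [f3L]; exact fLS v hv, ?_, ?_⟩
        · intro u v
          rw [f3E u v, f1E u v, fE u v]
          constructor
          · rintro ((h | ⟨hue, hv, hcv, hE⟩ | ⟨hve, hu, hcu, hE⟩) | ⟨⟨x, hx, hEx⟩, h⟩)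
            · exact Or.inl h
            · exact Or.inr (Or.inl ⟨hue, hv, List.mem_cons_of_mem t hcv, hE⟩)
            · exact Or.inr (Or.inr ⟨hve, hu, List.mem_cons_of_mem t hcu, hE⟩)
            · rcases h with ⟨hue, hv, hcv⟩ | ⟨hve, hu, hcu⟩
              · have hEwv : G.Edge w v := G.edge_transfer (hcls x v (hx.trans hcv.symm))
                  (fun h => hwS' (h ▸ hv)) hEx
                exact Or.inr (Or.inl ⟨hue, hv, hcv ▸ (List.mem_cons_self : t ∈ t :: l), hEwv⟩)
              · have hEwu : G.Edge w u := G.edge_transfer (hcls x u (hx.trans hcu.symm))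
                  (fun h => hwS' (h ▸ hu)) hEx
                exact Or.inr (Or.inr ⟨hve, hu, hcu ▸ (List.mem_cons_self : t ∈ t :: l),
                  G.edge_symm _ _ hEwu⟩)
          · rintro (h | ⟨hue, hv, hcv, hE⟩ | ⟨hve, hu, hcu, hE⟩)
            · exact Or.inl (Or.inl h)
            · rcases List.mem_cons.mp hcv with hcv | hcv
              · exact Or.inr ⟨⟨v, hcv, hE⟩, Or.inl ⟨hue, hv, hcv⟩⟩
              · exact Or.inl (Or.inr (Or.inl ⟨hue, hv, hcv, hE⟩))
            · rcases List.mem_cons.mp hcu with hcu | hcu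
              · exact Or.inr ⟨⟨u, hcu, G.edge_symm _ _ hE⟩, Or.inr ⟨hve, hu, hcu⟩⟩
              · exact Or.inl (Or.inr (Or.inr ⟨hve, hu, hcu, hE⟩))
        · intro u v
          rw [f3A u v, f2A u v, fA u v]
          constructor
          · rintro ((((h | ⟨hue, hv, hcv, hA⟩ | ⟨hve, hu, hcu, hA⟩)
              | ⟨⟨x, hx, hAx⟩, hue, hv, hcv⟩) | ⟨⟨x, hx, hAx⟩, hve, hu, hcu⟩))
            · exact Or.inl h
            · exact Or.inr (Or.inl ⟨hue, hv, List.mem_cons_of_mem t hcv, hA⟩)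
            · exact Or.inr (Or.inr ⟨hve, hu, List.mem_cons_of_mem t hcu, hA⟩)
            · exact Or.inr (Or.inl ⟨hue, hv, hcv ▸ (List.mem_cons_self : t ∈ t :: l),
                G.arcOut_transfer (hcls x v (hx.trans hcv.symm)) hAx⟩)
            · exact Or.inr (Or.inr ⟨hve, hu, hcu ▸ (List.mem_cons_self : t ∈ t :: l),
                G.arcIn_transfer (hcls x u (hx.trans hcu.symm)) hAx⟩)
          · rintro (h | ⟨hue, hv, hcv, hA⟩ | ⟨hve, hu, hcu, hA⟩)
            · exact Or.inl (Or.inl (Or.inl h))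
            · rcases List.mem_cons.mp hcv with hcv | hcv
              · exact Or.inl (Or.inr ⟨⟨v, hcv, hue ▸ hA⟩, hue, hv, hcv⟩)
              · exact Or.inl (Or.inl (Or.inr (Or.inl ⟨hue, hv, hcv, hA⟩)))
            · rcases List.mem_cons.mp hcu with hcu | hcu
              · exact Or.inr ⟨⟨u, hcu, hve ▸ hA⟩, hve, hu, hcu⟩
              · exact Or.inl (Or.inl (Or.inr (Or.inr ⟨hve, hu, hcu, hA⟩)))
    obtain ⟨f, fWF, fV, fLw, fLS, fE, fA⟩ := key (List.finRange k)
    refine ⟨.relabel s (cls w).castSucc f, fWF, ?_, ?_, ?_, ?_⟩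
    · show f.eval.verts = _
      rw [fV, Finset.coe_cons]
    · intro v hv
      simp only [MCExpr.eval]
      rcases Finset.mem_cons.mp hv with hv | hv
      · rw [hv, fLw, if_pos rfl]
      · rw [fLS v hv, if_neg (fun h => hne _ h.symm)]
    · intro u v
      show f.eval.Edge u v ↔ _
      simp only [fE u v, List.mem_finRange, true_and, Finset.mem_cons]
      constructor
      · rintro (⟨hu, hv, h⟩ | ⟨hue, hv, h⟩ | ⟨hve, hu, h⟩)
        · exact ⟨Or.inr hu, Or.inr hv, h⟩
        · exact ⟨Or.inl hue, Or.inr hv, hue ▸ h⟩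
        · exact ⟨Or.inr hu, Or.inl hve, hve ▸ h⟩
      · rintro ⟨(hu | hu), (hv | hv), h⟩
        · exact absurd ((hu.trans hv.symm) ▸ h) (G.edge_irrefl v)
        · exact Or.inr (Or.inl ⟨hu, hv, hu ▸ h⟩)
        · exact Or.inr (Or.inr ⟨hv, hu, hv ▸ h⟩)
        · exact Or.inl ⟨hu, hv, h⟩
    · intro u v
      show f.eval.Arc u v ↔ _
      simp only [fA u v, List.mem_finRange, true_and, Finset.mem_cons]
      constructor
      · rintro (⟨hu, hv, h⟩ | ⟨hue, hv, h⟩ | ⟨hve, hu, h⟩)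
        · exact ⟨Or.inr hu, Or.inr hv, h⟩
        · exact ⟨Or.inl hue, Or.inr hv, hue ▸ h⟩
        · exact ⟨Or.inr hu, Or.inl hve, hve ▸ h⟩
      · rintro ⟨(hu | hu), (hv | hv), h⟩
        · exact absurd ((hu.trans hv.symm) ▸ h) (G.arc_irrefl v)
        · exact Or.inr (Or.inl ⟨hu, hv, hu ▸ h⟩)
        · exact Or.inr (Or.inr ⟨hv, hu, hv ▸ h⟩)
        · exact Or.inl ⟨hu, hv, h⟩

theorem stmt16 {V : Type} [Fintype V] [Nonempty V] (G : MixedGraph V) (hG : G.Acyclic) :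
    ∃ e : MCExpr (Fin (G.ndm + 1)) V, e.Builds G.Edge G.Arc := by
  classical
  have hEquiv : Equivalence G.SameType := G.sameType_equivalence
  have hfin : Finite (Quot G.SameType) := Quot.finite _
  obtain ⟨eqv⟩ : Nonempty (Quot G.SameType ≃ Fin G.ndm) :=
    ⟨Finite.equivFinOfCardEq rfl⟩
  set cls : V → Fin G.ndm := fun v => eqv (Quot.mk _ v) with hclsdef
  have hcls : ∀ u v, cls u = cls v → G.SameType u v := by
    intro u v h
    have h2 : Quot.mk G.SameType u = Quot.mk G.SameType v := eqv.injective h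
    exact hEquiv.eqvGen_iff.mp (Quot.eqvGen_exact h2)
  obtain ⟨e, h1, h2, h3, h4, h5⟩ := build_aux G cls hcls Finset.univ Finset.univ_nonempty
  refine ⟨e, h1, by simpa using h2, fun u v => by simpa using h4 u v,
    fun u v => by simpa using h5 u v⟩
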